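/- Let X be a real normed space partially ordered by a nontrivial pointed convex cone C, and let A ⊆ X. Assume that C is closed and that (C, C_α) has the strict separation property for every 0 < α < 1. If A is weakly compact, then Min(A, C) ⊆ closure(GHe(A, C)). -/

import Mathlib

open Set Metric Pointwise

namespace HenigPaper

variable {X : Type*} [NormedAddCommGroup X] [NormedSpace ℝ X]

/-- `C` is a cone: closed under multiplication by nonnegative scalars. -/
def IsCone (C : Set X) : Prop :=
  ∀ ⦃l : ℝ⦄, 0 ≤ l → ∀ ⦃x⦄, x ∈ C → l • x ∈ C

/-- `C` is a nontrivial cone: `{0} ⊊ C ⊊ X`. -/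
def NontrivialCone (C : Set X) : Prop :=
  IsCone C ∧ ({(0 : X)} : Set X) ⊂ C ∧ C ≠ Set.univ

/-- A cone is pointed if `(-C) ∩ C = {0}`. -/
def PointedCone' (C : Set X) : Prop := (-C) ∩ C = ({(0 : X)} : Set X)

/-- Convexity of a cone in the sense `C + C = C`. -/
def ConeConvex (C : Set X) : Prop := C + C = C

/-- The strict separation property (SSP) for the pair of cones `(C, K)`. -/
def SSP (C K : Set X) : Prop :=
  (0 : X) ∉ closure (convexHull ℝ (C ∩ sphere (0 : X) 1) -
    convexHull ℝ ((frontier K ∩ sphere (0 : X) 1) ∪ {(0 : X)}))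

/-- The Bishop–Phelps cone `C(f, α) = {x : f x ≥ α ‖x‖}`. -/
def BPCone (f : X →L[ℝ] ℝ) (α : ℝ) : Set X := {x : X | α * ‖x‖ ≤ f x}

/-- The sublevel set `S(f, α) = {x : f x + α ‖x‖ ≤ 0}`. -/
def Ssub (f : X →L[ℝ] ℝ) (α : ℝ) : Set X := {x : X | f x + α * ‖x‖ ≤ 0}

/-- `f ∈ C^#`: strictly positive functionals on `C`. -/
def StrictlyPos (C : Set X) (f : X →L[ℝ] ℝ) : Prop :=
  ∀ x ∈ C, x ≠ 0 → 0 < f x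

/-- `(f, α) ∈ C^{a*}`: the augmented dual cone. -/
def MemAugDual (C : Set X) (f : X →L[ℝ] ℝ) (α : ℝ) : Prop :=
  StrictlyPos C f ∧ 0 ≤ α ∧ ∀ x ∈ C, α * ‖x‖ ≤ f x

/-- `(f, α) ∈ C^{a#}_+`. -/
def MemAugDualSharpPlus (C : Set X) (f : X →L[ℝ] ℝ) (α : ℝ) : Prop :=
  StrictlyPos C f ∧ 0 < α ∧ ∀ x ∈ C, x ≠ 0 → α * ‖x‖ < f x

/-- `B` is a base for the cone `C`. -/
def IsBase (C B : Set X) : Prop :=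
  B.Nonempty ∧ Convex ℝ B ∧ B ⊆ C ∧ (0 : X) ∉ closure B ∧
    ∀ x ∈ C, x ≠ (0 : X) → ∃! p : ℝ × X, 0 < p.1 ∧ p.2 ∈ B ∧ x = p.1 • p.2

/-- The cone `C` has a bounded base. -/
def HasBoundedBase (C : Set X) : Prop :=
  ∃ B : Set X, IsBase C B ∧ Bornology.IsBounded B

/-- The cone generated by a set `A`. -/
def coneGen (A : Set X) : Set X := {y : X | ∃ l : ℝ, 0 ≤ l ∧ ∃ a ∈ A, y = l • a}

/-- The `ε`-conic neighbourhood `C_ε` of a cone `C`. -/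
def epsCone (C : Set X) (ε : ℝ) : Set X :=
  coneGen {x : X | infDist x (C ∩ sphere (0 : X) 1) ≤ ε}

/-- `δ_B = inf {‖b‖ : b ∈ B}`. -/
noncomputable def deltaB (B : Set X) : ℝ := sInf ((fun b => ‖b‖) '' B)

/-- The Henig dilating cone `C_{(B,ε)}`. -/
def henigCone (B : Set X) (ε : ℝ) : Set X :=
  coneGen {x : X | infDist x B ≤ ε}

/-- The set of efficient (Pareto minimal) points of `A` with respect to the cone `C`. -/
def MinSet (A C : Set X) : Set X :=
  {x ∈ A | (A - ({x} : Set X)) ∩ (-C) = ({(0 : X)} : Set X)}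

/-- The set of Henig global proper efficient points of `A` with respect to `C`. -/
def GHe (A C : Set X) : Set X :=
  {x : X | ∃ K : Set X, IsCone K ∧ ConeConvex K ∧ C \ {(0 : X)} ⊆ interior K ∧
    x ∈ MinSet A K}

/-- A subset of `X` is weakly compact if it is compact in the weak topology. -/
def WeaklyCompact (A : Set X) : Prop :=
  IsCompact ((toWeakSpace ℝ X) '' A)

end HenigPaper

open HenigPaper

variable {X : Type*} [NormedAddCommGroup X] [NormedSpace ℝ X]


namespace HenigPaper

lemma coneGen_smul {A : Set X} {x : X} (hx : x ∈ coneGen A) {l : ℝ} (hl : 0 ≤ l) :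
    l • x ∈ coneGen A := by
  obtain ⟨m, hm, a, ha, rfl⟩ := hx
  exact ⟨l * m, mul_nonneg hl hm, a, ha, (mul_smul l m a).symm⟩

lemma exists_frontier_of_path {p : ℝ → X} {u : Set X}
    (hp : ContinuousOn p (Icc 0 1)) (h0 : p 0 ∉ u) (h1 : p 1 ∈ interior u) :
    ∃ t ∈ Icc (0:ℝ) 1, p t ∈ frontier u := by
  by_contra h
  push_neg at h
  have himg : IsPreconnected (p '' Icc 0 1) := (isPreconnected_Icc).image p hp
  have h0c : p 0 ∉ closure u := by
    intro hc
    exact h 0 ⟨le_refl 0, zero_le_one⟩ ⟨hc, fun hi => h0 (interior_subset hi)⟩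
  obtain ⟨x, ⟨-, hxi, hxc⟩⟩ := himg (interior u) (closure u)ᶜ isOpen_interior
    isClosed_closure.isOpen_compl
    (by
      rintro y ⟨t, ht, rfl⟩
      by_cases hyc : p t ∈ closure u
      · by_cases hyi : p t ∈ interior u
        · exact Or.inl hyi
        · exact absurd ⟨hyc, hyi⟩ (h t ht)
      · exact Or.inr hyc)
    ⟨p 1, mem_image_of_mem _ (right_mem_Icc.2 zero_le_one), h1⟩
    ⟨p 0, mem_image_of_mem _ (left_mem_Icc.2 zero_le_one), h0c⟩
  exact hxc (interior_subset_closure hxi)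

/-- From the SSP we extract a functional and a Bishop–Phelps cone squeezed
between `C` and the conic neighbourhood. -/
lemma ssp_dual {C : Set X} (hCc : IsCone C) {c₀ : X} (hc₀ : c₀ ∈ C ∩ sphere (0:X) 1)
    {α : ℝ} (hα0 : 0 < α) (hssp : SSP C (epsCone C α)) :
    ∃ (g : X →L[ℝ] ℝ) (β : ℝ), 0 < β ∧ (∀ x ∈ C, x ≠ 0 → β * ‖x‖ < g x) ∧
      BPCone g β ⊆ epsCone C α := by
  classical
  set S := sphere (0:X) 1 with hS
  set D := convexHull ℝ (C ∩ S) - convexHull ℝ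
      ((frontier (epsCone C α) ∩ S) ∪ {(0:X)}) with hD
  have hDconv : Convex ℝ D := (convex_convexHull ℝ _).sub (convex_convexHull ℝ _)
  obtain ⟨f, u, hfu, hu0⟩ :=
    geometric_hahn_banach_closed_point hDconv.closure isClosed_closure hssp
  have hu0' : u < 0 := by simpa using hu0
  set g : X →L[ℝ] ℝ := -f with hg
  set δ : ℝ := -u with hδ
  have hδ0 : 0 < δ := by simp [hδ]; linarith
  have hDg : ∀ z ∈ D, δ < g z := by
    intro z hz
    have := hfu z (subset_closure hz)
    simp only [hg, ContinuousLinearMap.neg_apply, hδ]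
    linarith
  have hmem0 : (0:X) ∈ convexHull ℝ ((frontier (epsCone C α) ∩ S) ∪ {(0:X)}) :=
    subset_convexHull ℝ _ (Or.inr rfl)
  have hCg : ∀ c ∈ C ∩ S, δ < g c := by
    intro c hc
    have : c - 0 ∈ D := Set.sub_mem_sub (subset_convexHull ℝ _ hc) hmem0
    simpa using hDg _ this
  have hpair : ∀ c ∈ C ∩ S, ∀ w ∈ frontier (epsCone C α) ∩ S, δ < g c - g w := by
    intro c hc w hw
    have : c - w ∈ D :=
      Set.sub_mem_sub (subset_convexHull ℝ _ hc) (subset_convexHull ℝ _ (Or.inl hw))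
    simpa using hDg _ this
  -- the infimum of g on C ∩ S
  have hne : (g '' (C ∩ S)).Nonempty := ⟨g c₀, mem_image_of_mem _ hc₀⟩
  have hbdd : BddBelow (g '' (C ∩ S)) := by
    refine ⟨δ, ?_⟩
    rintro - ⟨c, hc, rfl⟩
    exact (hCg c hc).le
  set m : ℝ := sInf (g '' (C ∩ S)) with hm
  have hδm : δ ≤ m := le_csInf hne (by rintro - ⟨c, hc, rfl⟩; exact (hCg c hc).le)
  have hm_le : ∀ c ∈ C ∩ S, m ≤ g c := fun c hc => csInf_le hbdd (mem_image_of_mem _ hc)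
  set β : ℝ := m - δ / 2 with hβ
  have hβ0 : 0 < β := by simp only [hβ]; linarith
  have hβm : β < m := by simp only [hβ]; linarith
  have hfr : ∀ w ∈ frontier (epsCone C α) ∩ S, g w < β := by
    intro w hw
    have : g w + δ ≤ m := le_csInf hne (by
      rintro - ⟨c, hc, rfl⟩
      have := hpair c hc w hw
      linarith)
    simp only [hβ]; linarith
  -- strict positivity on C
  have hstrict : ∀ x ∈ C, x ≠ 0 → β * ‖x‖ < g x := by
    intro x hx hx0
    have hxn : (0:ℝ) < ‖x‖ := norm_pos_iff.2 hx0
    have hu : ‖x‖⁻¹ • x ∈ C ∩ S := by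
      refine ⟨hCc (by positivity) hx, ?_⟩
      simp [hS, mem_sphere_zero_iff_norm, norm_smul, abs_of_nonneg (inv_nonneg.2 hxn.le),
        inv_mul_cancel₀ hxn.ne']
    have h1 : m ≤ g (‖x‖⁻¹ • x) := hm_le _ hu
    have h2 : g (‖x‖⁻¹ • x) = ‖x‖⁻¹ * g x := by rw [map_smul]; rfl
    rw [h2] at h1
    have : β < ‖x‖⁻¹ * g x := lt_of_lt_of_le hβm h1
    calc β * ‖x‖ < (‖x‖⁻¹ * g x) * ‖x‖ := by
              exact mul_lt_mul_of_pos_right this hxn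
      _ = g x := by field_simp
  refine ⟨g, β, hβ0, hstrict, ?_⟩
  -- the inclusion BPCone ⊆ epsCone
  have hc₀eps : ∀ z ∈ ball c₀ α, z ∈ epsCone C α := by
    intro z hz
    refine ⟨1, zero_le_one, z, ?_, (one_smul ℝ z).symm⟩
    exact le_trans (infDist_le_dist_of_mem hc₀) (le_of_lt (mem_ball.1 hz))
  have hc₀int : c₀ ∈ interior (epsCone C α) :=
    mem_interior.2 ⟨ball c₀ α, hc₀eps, isOpen_ball, mem_ball_self hα0⟩
  intro x hx
  rcases eq_or_ne x 0 with rfl | hx0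
  · refine ⟨0, le_refl 0, c₀, ?_, by simp⟩
    show infDist c₀ (C ∩ sphere (0:X) 1) ≤ α
    rw [infDist_zero_of_mem (show c₀ ∈ C ∩ sphere (0:X) 1 from hc₀)]
    exact hα0.le
  · have hxn : (0:ℝ) < ‖x‖ := norm_pos_iff.2 hx0
    set v : X := ‖x‖⁻¹ • x with hv
    have hvn : ‖v‖ = 1 := by
      simp [hv, norm_smul, abs_of_nonneg (inv_nonneg.2 hxn.le), inv_mul_cancel₀ hxn.ne']
    have hgv : β ≤ g v := by
      have h1 : β * ‖x‖ ≤ g x := hx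
      have h2 : g v = ‖x‖⁻¹ * g x := by rw [hv, map_smul]; rfl
      have h3 : β = ‖x‖⁻¹ * (β * ‖x‖) := by field_simp
      rw [h2, h3]
      exact mul_le_mul_of_nonneg_left h1 (inv_nonneg.2 hxn.le)
    suffices hveps : v ∈ epsCone C α by
      have := coneGen_smul hveps (norm_nonneg x)
      rwa [hv, smul_inv_smul₀ hxn.ne'] at this
    by_contra hvnot
    -- path from v to c₀ on the sphere
    set γ : ℝ → X := fun t => (1 - t) • v + t • c₀ with hγ
    have hgγ : ∀ t ∈ Icc (0:ℝ) 1, β ≤ g (γ t) := by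
      intro t ht
      have h1 : g (γ t) = (1 - t) * g v + t * g c₀ := by
        simp [hγ, map_add, map_smul]
      have h2 : β ≤ g c₀ := le_trans hβm.le (hm_le _ hc₀)
      obtain ⟨ht0, ht1⟩ := ht
      nlinarith
    have hγne : ∀ t ∈ Icc (0:ℝ) 1, γ t ≠ 0 := by
      intro t ht h0
      have := hgγ t ht
      rw [h0] at this
      simp at this
      linarith
    set p : ℝ → X := fun t => ‖γ t‖⁻¹ • γ t with hp
    have hγcont : Continuous γ := by fun_prop
    have hpcont : ContinuousOn p (Icc 0 1) := by
      apply ContinuousOn.smul _ hγcont.continuousOn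
      exact (hγcont.norm.continuousOn).inv₀ fun t ht => norm_ne_zero_iff.2 (hγne t ht)
    have hp0 : p 0 = v := by simp [hp, hγ, hvn]
    have hp1 : p 1 = c₀ := by
      have : ‖c₀‖ = 1 := mem_sphere_zero_iff_norm.1 hc₀.2
      simp [hp, hγ, this]
    obtain ⟨t, ht, hfront⟩ := exists_frontier_of_path hpcont (hp0 ▸ hvnot) (hp1 ▸ hc₀int)
    have hptS : p t ∈ S := by
      rw [hS, mem_sphere_zero_iff_norm]
      simp [hp, norm_smul, abs_of_nonneg (inv_nonneg.2 (norm_nonneg _)),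
        inv_mul_cancel₀ (norm_ne_zero_iff.2 (hγne t ht))]
    have hlt : g (p t) < β := hfr _ ⟨hfront, hptS⟩
    -- but g (p t) ≥ β since ‖γ t‖ ≤ 1
    obtain ⟨ht0, ht1⟩ := ht
    have e1 : ‖(1 - t) • v‖ = (1 - t) * ‖v‖ := by
      rw [norm_smul, Real.norm_eq_abs, abs_of_nonneg (by linarith : (0:ℝ) ≤ 1 - t)]
    have e2 : ‖t • c₀‖ = t * ‖c₀‖ := by
      rw [norm_smul, Real.norm_eq_abs, abs_of_nonneg ht0]
    have hγle : ‖γ t‖ ≤ 1 := by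
      calc ‖γ t‖ ≤ ‖(1 - t) • v‖ + ‖t • c₀‖ := norm_add_le _ _
        _ = (1 - t) * ‖v‖ + t * ‖c₀‖ := by rw [e1, e2]
        _ = 1 := by rw [hvn, mem_sphere_zero_iff_norm.1 hc₀.2]; ring
    have hγpos : 0 < ‖γ t‖ := norm_pos_iff.2 (hγne t ⟨ht0, ht1⟩)
    have hinv : 1 ≤ ‖γ t‖⁻¹ := (one_le_inv₀ hγpos).2 hγle
    have hgpt : g (p t) = ‖γ t‖⁻¹ * g (γ t) := by rw [hp]; simp only [map_smul]; rfl
    have hβγ : β ≤ g (γ t) := hgγ t ⟨ht0, ht1⟩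
    have : β ≤ g (p t) := by
      rw [hgpt]
      exact le_trans hβγ (le_mul_of_one_le_left (le_trans hβ0.le hβγ) hinv)
    linarith


variable {g : X →L[ℝ] ℝ} {β : ℝ}

lemma BPCone.zero_mem : (0 : X) ∈ BPCone g β := by simp [BPCone]

lemma BPCone.add_mem (hβ : 0 ≤ β) {x y : X} (hx : x ∈ BPCone g β) (hy : y ∈ BPCone g β) :
    x + y ∈ BPCone g β := by
  have h := norm_add_le x y
  have hx' : β * ‖x‖ ≤ g x := hx
  have hy' : β * ‖y‖ ≤ g y := hy
  show β * ‖x + y‖ ≤ g (x + y)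
  rw [map_add]
  nlinarith

lemma BPCone.isCone : IsCone (BPCone g β) := by
  intro l hl x hx
  have hx' : β * ‖x‖ ≤ g x := hx
  show β * ‖l • x‖ ≤ g (l • x)
  rw [map_smul, norm_smul, Real.norm_eq_abs, abs_of_nonneg hl]
  calc β * (l * ‖x‖) = l * (β * ‖x‖) := by ring
    _ ≤ l * g x := mul_le_mul_of_nonneg_left hx' hl
    _ = l • g x := rfl

lemma BPCone.coneConvex (hβ : 0 ≤ β) : ConeConvex (BPCone g β) := by
  apply Set.Subset.antisymm
  · rintro z ⟨x, hx, y, hy, rfl⟩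
    exact BPCone.add_mem hβ hx hy
  · intro x hx
    exact ⟨x, hx, 0, BPCone.zero_mem, by simp⟩

lemma BPCone.convex (hβ : 0 ≤ β) : Convex ℝ (BPCone g β) := by
  intro x hx y hy a b ha hb hab
  have hx' : β * ‖x‖ ≤ g x := hx
  have hy' : β * ‖y‖ ≤ g y := hy
  show β * ‖a • x + b • y‖ ≤ g (a • x + b • y)
  have h1 : ‖a • x + b • y‖ ≤ a * ‖x‖ + b * ‖y‖ := by
    calc ‖a • x + b • y‖ ≤ ‖a • x‖ + ‖b • y‖ := norm_add_le _ _
      _ = a * ‖x‖ + b * ‖y‖ := by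
          rw [norm_smul, norm_smul, Real.norm_eq_abs, Real.norm_eq_abs,
            abs_of_nonneg ha, abs_of_nonneg hb]
  rw [map_add, map_smul, map_smul]
  have : β * ‖a • x + b • y‖ ≤ β * (a * ‖x‖ + b * ‖y‖) :=
    mul_le_mul_of_nonneg_left h1 hβ
  have h2 : a * (β * ‖x‖) ≤ a * g x := mul_le_mul_of_nonneg_left hx' ha
  have h3 : b * (β * ‖y‖) ≤ b * g y := mul_le_mul_of_nonneg_left hy' hb
  simp only [smul_eq_mul]
  nlinarith

lemma BPCone.isClosed : IsClosed (BPCone g β) :=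
  isClosed_le (by fun_prop) g.continuous

/-- A convex norm-closed set has closed image in the weak space. -/
lemma weakClosed_of_convex_closed {K : Set X} (hconv : Convex ℝ K) (hcl : IsClosed K) :
    IsClosed ((toWeakSpace ℝ X) '' K) := by
  have := hconv.toWeakSpace_closure (𝕜 := ℝ)
  rw [hcl.closure_eq] at this
  rw [← closure_eq_iff_isClosed, ← this]

/-- Weakly compact sets are norm bounded. -/
lemma bounded_of_weaklyCompact {A : Set X} (hcpt : WeaklyCompact A) :
    ∃ M : ℝ, 0 ≤ M ∧ ∀ a ∈ A, ‖a‖ ≤ M := by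
  classical
  set T := toWeakSpace ℝ X
  have hpt : ∀ f : X →L[ℝ] ℝ, ∃ Cf : ℝ, ∀ a : A, ‖f (a : X)‖ ≤ Cf := by
    intro f
    have hf : Continuous fun w : WeakSpace ℝ X => f ((toWeakSpace ℝ X).symm w) :=
      WeakBilin.eval_continuous ((topDualPairing ℝ X).flip) f
    have himg : IsCompact ((fun w : WeakSpace ℝ X => f ((toWeakSpace ℝ X).symm w)) '' (T '' A)) :=
      hcpt.image hf
    obtain ⟨Cf, hCf⟩ := himg.isBounded.exists_norm_le
    refine ⟨Cf, fun a => ?_⟩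
    have : f (a : X) ∈ (fun w : WeakSpace ℝ X => f ((toWeakSpace ℝ X).symm w)) '' (T '' A) := by
      exact ⟨T a, mem_image_of_mem _ a.2, rfl⟩
    exact hCf _ this
  have hbs : ∀ φ : StrongDual ℝ X, ∃ Cf : ℝ, ∀ a : A,
      ‖(NormedSpace.inclusionInDoubleDual ℝ X (a : X)) φ‖ ≤ Cf := by
    intro φ
    obtain ⟨Cf, hCf⟩ := hpt φ
    exact ⟨Cf, fun a => hCf a⟩
  obtain ⟨M, hM⟩ := banach_steinhaus (g := fun a : A => NormedSpace.inclusionInDoubleDual ℝ X (a : X))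
    (fun φ => hbs φ)
  refine ⟨max M 0, le_max_right _ _, fun a ha => ?_⟩
  have h1 : ‖NormedSpace.inclusionInDoubleDual ℝ X a‖ = ‖a‖ :=
    (NormedSpace.inclusionInDoubleDualLi ℝ (E := X)).norm_map a
  calc ‖a‖ = ‖NormedSpace.inclusionInDoubleDual ℝ X a‖ := h1.symm
    _ ≤ M := hM ⟨a, ha⟩
    _ ≤ max M 0 := le_max_left _ _


/-- Points of the conic neighbourhood are close to the cone. -/
lemma epsCone_dist {C : Set X} (hCc : IsCone C) {c₀ : X} (hc₀ : c₀ ∈ C ∩ sphere (0:X) 1)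
    {α : ℝ} (hα0 : 0 < α) (hα : α ≤ 1/4) {z : X} (hz : z ∈ epsCone C α) :
    ∃ c ∈ C, ‖z - c‖ ≤ 4 * α * ‖z‖ := by
  obtain ⟨l, hl, a, ha, rfl⟩ := hz
  have hne : (C ∩ sphere (0:X) 1).Nonempty := ⟨c₀, hc₀⟩
  have h2 : infDist a (C ∩ sphere (0:X) 1) < 2 * α := lt_of_le_of_lt ha (by linarith)
  obtain ⟨k, hk, hak⟩ := (infDist_lt_iff hne).1 h2
  refine ⟨l • k, hCc hl hk.1, ?_⟩
  have hka : ‖a‖ ≥ 1 - 2 * α := by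
    have h3 : ‖k‖ = 1 := mem_sphere_zero_iff_norm.1 hk.2
    have h4 : ‖k‖ - ‖a‖ ≤ ‖a - k‖ := by
      rw [norm_sub_rev]
      exact norm_sub_norm_le _ _
    rw [dist_eq_norm] at hak
    linarith
  have hl2 : l ≤ 2 * ‖l • a‖ := by
    have h5 : ‖l • a‖ = l * ‖a‖ := by
      rw [norm_smul, Real.norm_eq_abs, abs_of_nonneg hl]
    nlinarith
  have h6 : ‖l • a - l • k‖ = l * ‖a - k‖ := by
    rw [← smul_sub, norm_smul, Real.norm_eq_abs, abs_of_nonneg hl]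
  rw [h6]
  rw [dist_eq_norm] at hak
  nlinarith [norm_nonneg (l • a), norm_nonneg (a - k)]

/-- Existence of a Bishop–Phelps minimal point in a section of a weakly compact set. -/
lemma exists_bp_min {A : Set X} (hcpt : WeaklyCompact A) (g : X →L[ℝ] ℝ) {β : ℝ}
    (hβ : 0 < β) {xb : X} (hxb : xb ∈ A) :
    ∃ x₀, x₀ ∈ A ∧ xb - x₀ ∈ BPCone g β ∧ x₀ ∈ MinSet A (BPCone g β) := by
  classical
  set T := toWeakSpace ℝ X with hT
  set K := BPCone g β with hK
  have hKconv : Convex ℝ K := BPCone.convex hβ.le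
  have hKcl : IsClosed K := BPCone.isClosed
  set Ksec : Set X := (fun z => xb - z) ⁻¹' K with hKsec
  have hKsconv : Convex ℝ Ksec := by
    intro x hx y hy a b ha hb hab
    have hcomb : a • (xb - x) + b • (xb - y) = xb - (a • x + b • y) := by
      calc a • (xb - x) + b • (xb - y) = (a + b) • xb - (a • x + b • y) := by
            rw [add_smul, smul_sub, smul_sub]; abel
        _ = xb - (a • x + b • y) := by rw [hab, one_smul]
    show xb - (a • x + b • y) ∈ K
    rw [← hcomb]
    exact hKconv hx hy ha hb hab
  have hKscl : IsClosed Ksec := hKcl.preimage (by fun_prop)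
  set W := A ∩ Ksec with hW
  have hxbW : xb ∈ W := ⟨hxb, by simp [hKsec, hK, BPCone.zero_mem (g := g) (β := β)]⟩
  have himg : T '' W = (T '' A) ∩ (T '' Ksec) :=
    Set.image_inter (toWeakSpace ℝ X).injective
  have hWcpt : IsCompact (T '' W) := by
    rw [himg]
    exact hcpt.inter_right (weakClosed_of_convex_closed hKsconv hKscl)
  have hWne : (T '' W).Nonempty := ⟨T xb, mem_image_of_mem _ hxbW⟩
  have hgcont : Continuous fun w : WeakSpace ℝ X => g ((toWeakSpace ℝ X).symm w) :=
    WeakBilin.eval_continuous ((topDualPairing ℝ X).flip) g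
  obtain ⟨w₀, hw₀, hmin⟩ := hWcpt.exists_isMinOn hWne hgcont.continuousOn
  obtain ⟨x₀, hx₀W, rfl⟩ := hw₀
  have hsymm : ∀ y : X, (toWeakSpace ℝ X).symm (T y) = y := fun y =>
    (toWeakSpace ℝ X).symm_apply_apply y
  have hminx : ∀ a ∈ W, g x₀ ≤ g a := by
    intro a haW
    have := hmin (mem_image_of_mem T haW)
    simpa [hsymm] using this
  refine ⟨x₀, hx₀W.1, hx₀W.2, hx₀W.1, ?_⟩
  apply Set.Subset.antisymm
  · rintro v ⟨hv1, hv2⟩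
    obtain ⟨p, hp, q, hq, rfl⟩ := hv1
    rw [Set.mem_singleton_iff.1 hq] at *
    have hpK : x₀ - p ∈ K := by
      have : -(p - x₀) ∈ K := Set.mem_neg.1 hv2
      simpa [neg_sub] using this
    have hpW : p ∈ W := by
      refine ⟨hp, ?_⟩
      have : xb - p = (xb - x₀) + (x₀ - p) := by abel
      show xb - p ∈ K
      rw [this]
      exact BPCone.add_mem hβ.le hx₀W.2 hpK
    have h1 : g x₀ ≤ g p := hminx p hpW
    have h2 : β * ‖x₀ - p‖ ≤ g (x₀ - p) := hpK
    rw [map_sub] at h2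
    have h3 : ‖x₀ - p‖ ≤ 0 := by nlinarith [norm_nonneg (x₀ - p)]
    have h4 : x₀ = p := by
      have := le_antisymm h3 (norm_nonneg _)
      rwa [norm_eq_zero, sub_eq_zero] at this
    simp [h4]
  · intro v hv
    rw [Set.mem_singleton_iff.1 hv]
    constructor
    · exact ⟨x₀, hx₀W.1, x₀, rfl, by abel⟩
    · rw [Set.mem_neg, neg_zero]
      exact BPCone.zero_mem


end HenigPaper

set_option maxHeartbeats 1000000 in
/-- Density of Henig global proper efficient points in the efficient set for
weakly compact sets. -/
theorem stmt19 (C : Set X) (hC : NontrivialCone C) (hpt : PointedCone' C)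
    (hconv : ConeConvex C) (hcl : IsClosed C) (A : Set X)
    (hssp : ∀ α : ℝ, 0 < α → α < 1 → SSP C (epsCone C α))
    (hcpt : WeaklyCompact A) :
    MinSet A C ⊆ closure (GHe A C) := by
  classical
  obtain ⟨hCc, hC1, -⟩ := hC
  -- a unit vector in C
  obtain ⟨c', hc'C, hc'0⟩ : ∃ c' ∈ C, c' ≠ (0:X) := by
    obtain ⟨-, hns⟩ := hC1
    rcases Set.not_subset.1 hns with ⟨c', hc'C, hc'0⟩
    exact ⟨c', hc'C, by simpa using hc'0⟩
  have hc'n : (0:ℝ) < ‖c'‖ := norm_pos_iff.2 hc'0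
  set c₀ : X := ‖c'‖⁻¹ • c' with hc₀def
  have hc₀ : c₀ ∈ C ∩ sphere (0:X) 1 := by
    refine ⟨hCc (by positivity) hc'C, ?_⟩
    simp [hc₀def, mem_sphere_zero_iff_norm, norm_smul,
      abs_of_nonneg (inv_nonneg.2 hc'n.le), inv_mul_cancel₀ hc'n.ne']
  -- norm bound on A
  obtain ⟨M, hM0, hM⟩ := bounded_of_weaklyCompact hcpt
  -- fixed strictly positive functional
  obtain ⟨g₀, β₀, hβ₀, hg₀, -⟩ :=
    ssp_dual hCc hc₀ (by norm_num : (0:ℝ) < 1/4) (hssp (1/4) (by norm_num) (by norm_num))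
  have hg₀le : ∀ x ∈ C, β₀ * ‖x‖ ≤ g₀ x := by
    intro x hx
    rcases eq_or_ne x 0 with rfl | hx0
    · simp
    · exact (hg₀ x hx hx0).le
  intro xb hxb
  obtain ⟨hxbA, hxbMin⟩ := hxb
  rw [Metric.mem_closure_iff]
  by_contra hcon
  push_neg at hcon
  obtain ⟨ε, hε, hfar⟩ := hcon
  -- the approximating sequence
  set αs : ℕ → ℝ := fun n => min (1/4 : ℝ) (1/(n+1)) with hαs
  have hαpos : ∀ n, 0 < αs n := by
    intro n
    apply lt_min (by norm_num)
    positivity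
  have hαle : ∀ n, αs n ≤ 1/4 := fun n => min_le_left _ _
  have H : ∀ n : ℕ, ∃ x : X, x ∈ A ∧ x ∈ GHe A C ∧ xb - x ∈ epsCone C (αs n) := by
    intro n
    obtain ⟨g, β, hβ, hg, hsub⟩ := ssp_dual hCc hc₀ (hαpos n)
      (hssp (αs n) (hαpos n) (lt_of_le_of_lt (hαle n) (by norm_num)))
    obtain ⟨x₀, hx₀A, hx₀K, hx₀min⟩ := exists_bp_min hcpt g hβ hxbA
    refine ⟨x₀, hx₀A, ⟨BPCone g β, BPCone.isCone, BPCone.coneConvex hβ.le, ?_, hx₀min⟩,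
      hsub hx₀K⟩
    -- C \ {0} ⊆ interior (BPCone g β)
    have hop : IsOpen {z : X | β * ‖z‖ < g z} :=
      isOpen_lt (continuous_const.mul continuous_norm) g.continuous
    have hsub2 : {z : X | β * ‖z‖ < g z} ⊆ BPCone g β := fun z hz => (le_of_lt hz : β * ‖z‖ ≤ g z)
    intro z hz
    exact interior_maximal hsub2 hop (hg z hz.1 (by simpa using hz.2))
  choose x hxA hxGHe hxeps using H
  have hfarn : ∀ n, ε ≤ ‖xb - x n‖ := by
    intro n
    have := hfar (x n) (hxGHe n)
    rw [dist_eq_norm] at this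
    linarith
  -- approximate decomposition
  have Hc : ∀ n : ℕ, ∃ c ∈ C, ‖(xb - x n) - c‖ ≤ 4 * αs n * ‖xb - x n‖ :=
    fun n => epsCone_dist hCc hc₀ (hαpos n) (hαle n) (hxeps n)
  choose cs hcsC hcsb using Hc
  set R : ℝ := ‖xb‖ + M with hR
  have hxbxn : ∀ n, ‖xb - x n‖ ≤ R := by
    intro n
    calc ‖xb - x n‖ ≤ ‖xb‖ + ‖x n‖ := norm_sub_le _ _
      _ ≤ R := by have := hM (x n) (hxA n); simp [hR]; linarith
  set r : ℕ → ℝ := fun n => 4 * αs n * R with hr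
  have hrb : ∀ n, ‖(xb - x n) - cs n‖ ≤ r n := by
    intro n
    refine le_trans (hcsb n) ?_
    have h1 : (0:ℝ) ≤ 4 * αs n := by positivity
    exact mul_le_mul_of_nonneg_left (hxbxn n) h1
  have hrpos : ∀ n, 0 ≤ r n := fun n => le_trans (norm_nonneg _) (hrb n)
  have hrlim : Filter.Tendsto r Filter.atTop (nhds 0) := by
    have h1 : Filter.Tendsto (fun n : ℕ => (1:ℝ)/(n+1)) Filter.atTop (nhds 0) :=
      tendsto_one_div_add_atTop_nhds_zero_nat
    have h2 : Filter.Tendsto (fun n : ℕ => 4 * ((1:ℝ)/(n+1)) * R) Filter.atTop (nhds 0) := by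
      have := (h1.const_mul (4:ℝ)).mul_const R
      simpa using this
    apply squeeze_zero hrpos _ h2
    intro n
    have h3 : αs n ≤ 1/(n+1) := min_le_right _ _
    have h4 : (0:ℝ) ≤ R := by simp [hR]; linarith [norm_nonneg xb]
    simp only [hr]
    nlinarith
  -- weak cluster point
  set T := toWeakSpace ℝ X with hT
  set F : Filter (WeakSpace ℝ X) := Filter.map (fun n => T (x n)) Filter.atTop with hF
  have hFle : F ≤ Filter.principal (T '' A) := by
    rw [hF, Filter.le_principal_iff, Filter.mem_map]
    exact Filter.Eventually.of_forall fun n => mem_image_of_mem T (hxA n)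
  haveI : F.NeBot := Filter.map_neBot
  obtain ⟨w, hwA, hwcl⟩ := hcpt.exists_clusterPt hFle
  obtain ⟨y, hyA, hyw⟩ := hwA
  -- the cluster point is xb
  have hyxb : y = xb := by
    have hyC : xb - y ∈ C := by
      have hdist : ∀ η : ℝ, 0 < η → infDist (xb - y) C ≤ η := by
        intro η hη
        set Sη : Set X := {z : X | infDist z C ≤ η} with hSη
        have hCconvex : Convex ℝ C := by
          intro u hu v hv a b ha hb hab
          have h1 : a • u ∈ C := hCc ha hu
          have h2 : b • v ∈ C := hCc hb hv
          have : a • u + b • v ∈ C + C := Set.add_mem_add h1 h2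
          rwa [hconv] at this
        have hSconv : Convex ℝ Sη := by
          intro z1 h1 z2 h2 a b ha hb hab
          show infDist (a • z1 + b • z2) C ≤ η
          refine le_of_forall_pos_le_add ?_
          intro δ hδ
          have hCne : C.Nonempty := ⟨c₀, hc₀.1⟩
          obtain ⟨d1, hd1, hzd1⟩ := (infDist_lt_iff hCne).1
            (lt_of_le_of_lt h1 (by linarith : η < η + δ))
          obtain ⟨d2, hd2, hzd2⟩ := (infDist_lt_iff hCne).1
            (lt_of_le_of_lt h2 (by linarith : η < η + δ))
          have hd : a • d1 + b • d2 ∈ C := hCconvex hd1 hd2 ha hb hab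
          refine le_trans (infDist_le_dist_of_mem hd) ?_
          rw [dist_eq_norm]
          have he : (a • z1 + b • z2) - (a • d1 + b • d2)
              = a • (z1 - d1) + b • (z2 - d2) := by
            rw [smul_sub, smul_sub]; abel
          rw [he]
          calc ‖a • (z1 - d1) + b • (z2 - d2)‖
              ≤ ‖a • (z1 - d1)‖ + ‖b • (z2 - d2)‖ := norm_add_le _ _
            _ = a * ‖z1 - d1‖ + b * ‖z2 - d2‖ := by
                rw [norm_smul, norm_smul, Real.norm_eq_abs, Real.norm_eq_abs,
                  abs_of_nonneg ha, abs_of_nonneg hb]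
            _ ≤ a * (η + δ) + b * (η + δ) := by
                rw [dist_eq_norm] at hzd1 hzd2
                have := mul_le_mul_of_nonneg_left hzd1.le ha
                have := mul_le_mul_of_nonneg_left hzd2.le hb
                linarith
            _ = η + δ := by rw [← add_mul, hab, one_mul]
        have hScl : IsClosed Sη := isClosed_le (continuous_infDist_pt C) continuous_const
        have hSwk : IsClosed (T '' Sη) := weakClosed_of_convex_closed hSconv hScl
        -- the map u ↦ T xb - u on the weak space
        have hφcont : Continuous fun u : WeakSpace ℝ X => T xb - u :=
          continuous_const.sub continuous_id
        have hclmap : ClusterPt (T xb - w) (Filter.map (fun u : WeakSpace ℝ X => T xb - u) F) :=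
          hwcl.map hφcont.continuousAt Filter.tendsto_map
        have hev : ∀ᶠ n in Filter.atTop, T xb - T (x n) ∈ T '' Sη := by
          have : ∀ᶠ n in Filter.atTop, r n < η := hrlim.eventually_lt_const hη
          filter_upwards [this] with n hn
          refine ⟨xb - x n, ?_, by rw [map_sub]⟩
          show infDist (xb - x n) C ≤ η
          refine le_trans (infDist_le_dist_of_mem (hcsC n)) ?_
          rw [dist_eq_norm]
          exact le_trans (hrb n) hn.le
        have hle2 : Filter.map (fun u : WeakSpace ℝ X => T xb - u) F
            ≤ Filter.principal (T '' Sη) := by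
          rw [hF, Filter.map_map, Filter.le_principal_iff, Filter.mem_map]
          exact hev
        have hne2 : ClusterPt (T xb - w) (Filter.principal (T '' Sη)) := by
          exact hclmap.mono hle2
        have hmem : T xb - w ∈ T '' Sη := by
          have := mem_closure_iff_clusterPt.2 hne2
          rwa [hSwk.closure_eq] at this
        obtain ⟨z, hz, hzeq⟩ := hmem
        have : z = xb - y := by
          apply (toWeakSpace ℝ X).injective
          rw [hzeq, ← hyw, ← map_sub]
        rwa [this] at hz
      have h0 : infDist (xb - y) C = 0 := by
        have h1 : infDist (xb - y) C ≤ 0 := by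
          by_contra h
          push_neg at h
          have := hdist (infDist (xb - y) C / 2) (by linarith)
          linarith
        linarith [infDist_nonneg (x := xb - y) (s := C)]
      have : xb - y ∈ closure C :=
        (mem_closure_iff_infDist_zero ⟨c₀, hc₀.1⟩).2 h0
      rwa [hcl.closure_eq] at this
    -- minimality gives y = xb
    have hmem : y - xb ∈ (A - ({xb} : Set X)) ∩ (-C) := by
      constructor
      · exact ⟨y, hyA, xb, rfl, rfl⟩
      · rw [Set.mem_neg, neg_sub]
        exact hyC
    rw [hxbMin] at hmem
    have h0 : y - xb = 0 := hmem
    exact sub_eq_zero.1 h0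
  -- final contradiction via g₀
  set τ : ℝ := β₀ * ε / 4 with hτ
  have hτpos : 0 < τ := by positivity
  have hg₀cont : Continuous fun u : WeakSpace ℝ X => g₀ ((toWeakSpace ℝ X).symm u) :=
    WeakBilin.eval_continuous ((topDualPairing ℝ X).flip) g₀
  have hVmem : {u : WeakSpace ℝ X | |g₀ ((toWeakSpace ℝ X).symm u) - g₀ xb| < τ}
      ∈ nhds w := by
    have h1 : g₀ ((toWeakSpace ℝ X).symm w) = g₀ xb := by
      rw [← hyw, (toWeakSpace ℝ X).symm_apply_apply, hyxb]
    have h2 : IsOpen {u : WeakSpace ℝ X | |g₀ ((toWeakSpace ℝ X).symm u) - g₀ xb| < τ} := by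
      have : Continuous fun u : WeakSpace ℝ X => |g₀ ((toWeakSpace ℝ X).symm u) - g₀ xb| :=
        (hg₀cont.sub continuous_const).abs
      exact isOpen_lt this continuous_const
    exact h2.mem_nhds (by simp [h1, hτpos])
  have hfreq : ∃ᶠ n in Filter.atTop, |g₀ (x n) - g₀ xb| < τ := by
    have hnb : (nhds w ⊓ F).NeBot := hwcl
    have hle3 : nhds w ⊓ F ≤ F ⊓ Filter.principal
        {u : WeakSpace ℝ X | |g₀ ((toWeakSpace ℝ X).symm u) - g₀ xb| < τ} := by
      refine le_inf inf_le_right (le_trans inf_le_left ?_)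
      rwa [Filter.le_principal_iff]
    have : (F ⊓ Filter.principal
        {u : WeakSpace ℝ X | |g₀ ((toWeakSpace ℝ X).symm u) - g₀ xb| < τ}).NeBot :=
      hnb.mono hle3
    have hfr : F.Frequently (fun u =>
        |g₀ ((toWeakSpace ℝ X).symm u) - g₀ xb| < τ) := by
      rwa [Filter.frequently_iff_neBot]
    rw [hF, Filter.frequently_map] at hfr
    refine hfr.mono fun n hn => ?_
    rwa [(toWeakSpace ℝ X).symm_apply_apply] at hn
  -- eventual lower bound
  have hnormg₀ : ∀ z : X, |g₀ z| ≤ ‖g₀‖ * ‖z‖ := by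
    intro z
    have := g₀.le_opNorm z
    calc |g₀ z| = ‖g₀ z‖ := rfl
      _ ≤ ‖g₀‖ * ‖z‖ := this
  set ρ : ℝ := min (ε/2) (τ / (2 * (‖g₀‖ + 1))) with hρ
  have hρpos : 0 < ρ := by
    apply lt_min (by linarith)
    have : (0:ℝ) < ‖g₀‖ + 1 := by positivity
    positivity
  have hev2 : ∀ᶠ n in Filter.atTop, r n < ρ := hrlim.eventually_lt_const hρpos
  have hlower : ∀ n, r n < ρ → τ < g₀ xb - g₀ (x n) := by
    intro n hn
    have hd : xb - x n = cs n + ((xb - x n) - cs n) := by abel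
    have h1 : g₀ (xb - x n) = g₀ (cs n) + g₀ ((xb - x n) - cs n) := by
      conv_lhs => rw [hd]
      rw [map_add]
    have h2 : β₀ * ‖cs n‖ ≤ g₀ (cs n) := hg₀le _ (hcsC n)
    have h3 : ‖cs n‖ ≥ ‖xb - x n‖ - r n := by
      have := hrb n
      have h4 : ‖xb - x n‖ - ‖cs n‖ ≤ ‖(xb - x n) - cs n‖ := norm_sub_norm_le _ _
      linarith
    have h5 : |g₀ ((xb - x n) - cs n)| ≤ ‖g₀‖ * r n := by
      refine le_trans (hnormg₀ _) ?_
      exact mul_le_mul_of_nonneg_left (hrb n) (norm_nonneg g₀)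
    have h6 : ε ≤ ‖xb - x n‖ := hfarn n
    have h7 : r n < ε / 2 := lt_of_lt_of_le hn (min_le_left _ _)
    have h8 : r n < τ / (2 * (‖g₀‖ + 1)) := lt_of_lt_of_le hn (min_le_right _ _)
    have h9 : ‖g₀‖ * r n < τ / 2 := by
      have hg1 : (0:ℝ) < ‖g₀‖ + 1 := by positivity
      have := mul_lt_mul_of_pos_left h8 hg1
      have h10 : (‖g₀‖ + 1) * (τ / (2 * (‖g₀‖ + 1))) = τ / 2 := by field_simp
      nlinarith [hrpos n, norm_nonneg g₀]
    have h11 : g₀ (xb - x n) = g₀ xb - g₀ (x n) := by rw [map_sub]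
    have h12 : β₀ * ‖cs n‖ ≥ β₀ * (ε - r n) := by
      have : ε - r n ≤ ‖cs n‖ := by linarith
      exact mul_le_mul_of_nonneg_left this hβ₀.le
    have h13 : β₀ * (ε - r n) ≥ β₀ * (ε / 2) := by
      have : ε / 2 ≤ ε - r n := by linarith
      exact mul_le_mul_of_nonneg_left this hβ₀.le
    have habs : -(τ/2) ≤ g₀ ((xb - x n) - cs n) := by
      have h14 := (abs_le.1 h5).1
      linarith
    have key : β₀ * (ε/2) - τ/2 ≤ g₀ xb - g₀ (x n) := by
      have := h1
      rw [h11] at this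
      linarith
    have hβε : 0 < β₀ * ε := mul_pos hβ₀ hε
    have e1 : β₀ * (ε/2) = β₀ * ε / 2 := by ring
    rw [hτ] at key ⊢
    linarith
  obtain ⟨n, hn1, hn2⟩ := (hfreq.and_eventually hev2).exists
  have := hlower n hn2
  have := abs_lt.1 hn1
  linarith
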